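/- Let p > 0, let A be a complex n×n matrix whose spectrum belongs to P_i = {λ ∈ ℂ : (Im λ)² < 2p·Re λ}, and let H be a Hermitian positive definite matrix satisfying HA + A*H − (1/(2p))·A*HA + (1/(4p))·(HA² + (A*)²H) = I. If B is a complex n×n matrix such that HB + B*H − (1/(2p))·(A*HB + B*HA + B*HB) + (1/(4p))·(H(AB + BA + B²) + (AB + BA + B²)*H) > −I (this matrix plus I positive definite), then for every complex n×n matrix C the equation K(A+B) + (A+B)*K − (1/(2p))·(A+B)*K(A+B) + (1/(4p))·(K(A+B)² + ((A+B)*)²K) = C has a unique solution K. -/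

import Mathlib

set_option maxHeartbeats 1000000
open Matrix
open scoped ComplexOrder

lemma mem_spectrum_iff_det {n : ℕ} (M : Matrix (Fin n) (Fin n) ℂ) (a : ℂ) :
    a ∈ spectrum ℂ M ↔ (a • (1 : Matrix (Fin n) (Fin n) ℂ) - M).det = 0 := by
  rw [spectrum.mem_iff, Algebra.algebraMap_eq_smul_one, Matrix.isUnit_iff_isUnit_det,
    isUnit_iff_ne_zero, not_not]

lemma mem_spectrum_of_mulVec {n : ℕ} (M : Matrix (Fin n) (Fin n) ℂ) (a : ℂ)
    (v : Fin n → ℂ) (hv : v ≠ 0) (h : M.mulVec v = a • v) : a ∈ spectrum ℂ M := by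
  rw [mem_spectrum_iff_det, ← Matrix.exists_mulVec_eq_zero_iff]
  exact ⟨v, hv, by rw [Matrix.sub_mulVec, Matrix.smul_mulVec, Matrix.one_mulVec, h, sub_self]⟩

lemma left_eig {n : ℕ} (M K : Matrix (Fin n) (Fin n) ℂ) (a : ℂ) (hK : K ≠ 0)
    (h : M * K = a • K) : a ∈ spectrum ℂ M := by
  have : ∃ i j, K i j ≠ 0 := by
    by_contra hc
    push_neg at hc
    exact hK (Matrix.ext fun i j => hc i j)
  obtain ⟨i, j, hij⟩ := this
  refine mem_spectrum_of_mulVec M a (fun k => K k j) (fun hc => hij (congrFun hc i)) ?_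
  funext k
  have := congrFun (congrFun h k) j
  simpa [Matrix.mulVec, Matrix.mul_apply, dotProduct] using this

lemma right_eig {n : ℕ} (M K : Matrix (Fin n) (Fin n) ℂ) (b : ℂ) (hK : K ≠ 0)
    (h : K * M = b • K) : b ∈ spectrum ℂ M := by
  have : ∃ i j, K i j ≠ 0 := by
    by_contra hc
    push_neg at hc
    exact hK (Matrix.ext fun i j => hc i j)
  obtain ⟨i, j, hij⟩ := this
  have hdet : b ∈ spectrum ℂ Mᵀ := by
    refine mem_spectrum_of_mulVec Mᵀ b (fun k => K i k) (fun hc => hij (congrFun hc j)) ?_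
    funext k
    have := congrFun (congrFun h i) k
    simpa [Matrix.mulVec, Matrix.mul_apply, dotProduct, Matrix.transpose_apply,
      mul_comm] using this
  rw [mem_spectrum_iff_det] at hdet ⊢
  rw [show (b • (1 : Matrix (Fin n) (Fin n) ℂ) - Mᵀ) = (b • 1 - M)ᵀ by
    simp [Matrix.transpose_smul], Matrix.det_transpose] at hdet
  exact hdet

lemma conj_spec {n : ℕ} (M : Matrix (Fin n) (Fin n) ℂ) (a : ℂ)
    (h : a ∈ spectrum ℂ Mᴴ) : star a ∈ spectrum ℂ M := by
  rw [mem_spectrum_iff_det] at h ⊢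
  have : (a • (1 : Matrix (Fin n) (Fin n) ℂ) - Mᴴ) = (star a • 1 - M)ᴴ := by
    simp [Matrix.conjTranspose_smul]
  rw [this, Matrix.det_conjTranspose] at h
  exact star_eq_zero.mp h

lemma scalar_ne {p : ℝ} (hp : 0 < p) (a b : ℂ)
    (ha : a.im ^ 2 < 2 * p * a.re) (hb : b.im ^ 2 < 2 * p * b.re) :
    b + a - ((1 / (2 * p) : ℝ) : ℂ) * (a * b)
      + ((1 / (4 * p) : ℝ) : ℂ) * (b ^ 2 + a ^ 2) ≠ 0 := by
  intro hc
  have hre := congrArg Complex.re hc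
  simp [Complex.add_re, Complex.sub_re, Complex.mul_re,
    Complex.mul_im, pow_two, Complex.zero_re] at hre
  set x1 := a.re; set y1 := a.im; set x2 := b.re; set y2 := b.im
  have hp' : p ≠ 0 := ne_of_gt hp
  have hre' : 4 * p * (x2 + x1 - p⁻¹ * 2⁻¹ * (x1 * x2 - y1 * y2)
      + p⁻¹ * 4⁻¹ * (x2 * x2 - y2 * y2 + (x1 * x1 - y1 * y1))) = 0 := by
    rw [hre]; ring
  field_simp at hre'
  nlinarith [sq_nonneg (x1 - x2), sq_nonneg (y1 + y2), sq_nonneg (y1 - y2),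
    mul_pos hp hp]


lemma op_inj {n : ℕ} {p : ℝ} (hp : 0 < p) (M : Matrix (Fin n) (Fin n) ℂ)
    (hspec : ∀ μ ∈ spectrum ℂ M, μ.im ^ 2 < 2 * p * μ.re)
    (K : Matrix (Fin n) (Fin n) ℂ)
    (hK : K * M + Mᴴ * K - ((1 / (2 * p) : ℝ) : ℂ) • (Mᴴ * K * M)
      + ((1 / (4 * p) : ℝ) : ℂ) • (K * M ^ 2 + Mᴴ ^ 2 * K) = 0) : K = 0 := by
  classical
  by_contra hK0
  set c2 : ℂ := ((1 / (2 * p) : ℝ) : ℂ)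
  set c4 : ℂ := ((1 / (4 * p) : ℝ) : ℂ)
  set P : Module.End ℂ (Matrix (Fin n) (Fin n) ℂ) := LinearMap.mulLeft ℂ Mᴴ with hP
  set Q : Module.End ℂ (Matrix (Fin n) (Fin n) ℂ) := LinearMap.mulRight ℂ M with hQ
  set L : Module.End ℂ (Matrix (Fin n) (Fin n) ℂ) := Q + P - c2 • (Q ∘ₗ P) + c4 • (Q ∘ₗ Q + P ∘ₗ P) with hL
  have hLapp : ∀ X : Matrix (Fin n) (Fin n) ℂ, L X = X * M + Mᴴ * X - c2 • (Mᴴ * X * M)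
      + c4 • (X * M ^ 2 + Mᴴ ^ 2 * X) := by
    intro X
    simp [hL, hP, hQ, LinearMap.mulLeft_apply, LinearMap.mulRight_apply, mul_assoc, pow_two]
  have hLQ : ∀ X : Matrix (Fin n) (Fin n) ℂ, L (X * M) = (L X) * M := by
    intro X
    simp only [hLapp, add_mul, sub_mul, smul_mul_assoc, mul_assoc, pow_two]
  have hLP : ∀ X : Matrix (Fin n) (Fin n) ℂ, L (Mᴴ * X) = Mᴴ * (L X) := by
    intro X
    simp only [hLapp, mul_add, mul_sub, mul_smul_comm, mul_assoc, pow_two]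
  have hKL : K ∈ LinearMap.ker L := by
    rw [LinearMap.mem_ker, hLapp]; exact hK
  set N := LinearMap.ker L with hN
  haveI : Nontrivial N := nontrivial_of_ne ⟨K, hKL⟩ 0 (by simp [Subtype.ext_iff, hK0])
  have hQN : ∀ x ∈ N, Q x ∈ N := by
    intro x hx
    rw [hN, LinearMap.mem_ker] at hx ⊢
    show L (x * M) = 0
    rw [hLQ, hx, zero_mul]
  obtain ⟨b, hb⟩ := Module.End.exists_eigenvalue (Q.restrict hQN)
  obtain ⟨x, hx⟩ := hb.exists_hasEigenvector
  have hxQ : (x : Matrix (Fin n) (Fin n) ℂ) * M = b • (x : Matrix (Fin n) (Fin n) ℂ) := by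
    have := Module.End.mem_eigenspace_iff.mp hx.1
    have h2 := congrArg Subtype.val this
    simpa [hQ] using h2
  set E : Submodule ℂ (Matrix (Fin n) (Fin n) ℂ) := Module.End.eigenspace Q b ⊓ N with hE
  have hxE : (x : Matrix (Fin n) (Fin n) ℂ) ∈ E := by
    refine Submodule.mem_inf.mpr ⟨Module.End.mem_eigenspace_iff.mpr hxQ, x.2⟩
  have hPE : ∀ y ∈ E, P y ∈ E := by
    intro y hy
    obtain ⟨hy1, hy2⟩ := Submodule.mem_inf.mp hy
    have hy1' : y * M = b • y := Module.End.mem_eigenspace_iff.mp hy1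
    refine Submodule.mem_inf.mpr ⟨Module.End.mem_eigenspace_iff.mpr ?_, ?_⟩
    · show (Mᴴ * y) * M = b • (Mᴴ * y)
      rw [mul_assoc, hy1', mul_smul_comm]
    · rw [hN, LinearMap.mem_ker] at hy2 ⊢
      show L (Mᴴ * y) = 0
      rw [hLP, hy2, mul_zero]
  haveI : Nontrivial E := nontrivial_of_ne ⟨(x : Matrix (Fin n) (Fin n) ℂ), hxE⟩ 0
    (by intro hc; rw [Submodule.mk_eq_zero] at hc; exact hx.2 (Subtype.ext hc))
  obtain ⟨a, ha⟩ := Module.End.exists_eigenvalue (P.restrict hPE)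
  obtain ⟨y, hy⟩ := ha.exists_hasEigenvector
  set Y : E := y with hYdef
  
  have hY0 : (Y : Matrix (Fin n) (Fin n) ℂ) ≠ 0 := by
    intro hc
    exact hy.2 (ZeroMemClass.coe_eq_zero.mp hc)
  have hPY : Mᴴ * (Y : Matrix (Fin n) (Fin n) ℂ) = a • (Y : Matrix (Fin n) (Fin n) ℂ) := by
    have := Module.End.mem_eigenspace_iff.mp hy.1
    have h2 := congrArg Subtype.val this
    simpa [hP] using h2
  obtain ⟨hy1, hy2⟩ := Submodule.mem_inf.mp Y.2
  have hQY : (Y : Matrix (Fin n) (Fin n) ℂ) * M = b • (Y : Matrix (Fin n) (Fin n) ℂ) := Module.End.mem_eigenspace_iff.mp hy1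
  have hLY : (Y : Matrix (Fin n) (Fin n) ℂ) * M + Mᴴ * (Y : Matrix (Fin n) (Fin n) ℂ) - c2 • (Mᴴ * (Y : Matrix (Fin n) (Fin n) ℂ) * M)
      + c4 • ((Y : Matrix (Fin n) (Fin n) ℂ) * M ^ 2 + Mᴴ ^ 2 * (Y : Matrix (Fin n) (Fin n) ℂ)) = 0 := by
    have := (LinearMap.mem_ker.mp hy2)
    rw [hLapp] at this; exact this
  have hscal : (b + a - c2 * (a * b) + c4 * (b ^ 2 + a ^ 2)) • (Y : Matrix (Fin n) (Fin n) ℂ) = 0 := by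
    rw [← hLY]
    have e1 : Mᴴ * (Y : Matrix (Fin n) (Fin n) ℂ) * M = (a * b) • (Y : Matrix (Fin n) (Fin n) ℂ) := by
      rw [mul_assoc, hQY, mul_smul_comm, hPY, smul_smul, mul_comm]
    have e2 : (Y : Matrix (Fin n) (Fin n) ℂ) * M ^ 2 = (b ^ 2) • (Y : Matrix (Fin n) (Fin n) ℂ) := by
      rw [pow_two, ← mul_assoc, hQY, smul_mul_assoc, hQY, smul_smul, pow_two]
    have e3 : Mᴴ ^ 2 * (Y : Matrix (Fin n) (Fin n) ℂ) = (a ^ 2) • (Y : Matrix (Fin n) (Fin n) ℂ) := by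
      rw [pow_two, mul_assoc, hPY, mul_smul_comm, hPY, smul_smul, pow_two]
    rw [e1, e2, e3, hQY, hPY]
    module
  have hzero : b + a - c2 * (a * b) + c4 * (b ^ 2 + a ^ 2) = 0 := by
    rcases smul_eq_zero.mp hscal with h | h
    · exact h
    · exact absurd h hY0
  have haM : a ∈ spectrum ℂ Mᴴ := left_eig Mᴴ (Y : Matrix (Fin n) (Fin n) ℂ) a hY0 hPY
  have haM' : star a ∈ spectrum ℂ M := conj_spec M a haM
  have hbM : b ∈ spectrum ℂ M := right_eig M (Y : Matrix (Fin n) (Fin n) ℂ) b hY0 hQY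
  have ha' : a.im ^ 2 < 2 * p * a.re := by
    have := hspec _ haM'
    simpa using this
  exact scalar_ne hp a b ha' (hspec _ hbM) hzero

lemma spec_parab {n : ℕ} {p : ℝ} (hp : 0 < p) (M Hm : Matrix (Fin n) (Fin n) ℂ)
    (hH : Hm.PosDef)
    (hpos : (Hm * M + Mᴴ * Hm - ((1 / (2 * p) : ℝ) : ℂ) • (Mᴴ * Hm * M)
      + ((1 / (4 * p) : ℝ) : ℂ) • (Hm * M ^ 2 + Mᴴ ^ 2 * Hm)).PosDef) :
    ∀ μ ∈ spectrum ℂ M, μ.im ^ 2 < 2 * p * μ.re := by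
  intro μ hμ
  set c2 : ℂ := ((1 / (2 * p) : ℝ) : ℂ)
  set c4 : ℂ := ((1 / (4 * p) : ℝ) : ℂ)
  rw [mem_spectrum_iff_det, ← Matrix.exists_mulVec_eq_zero_iff] at hμ
  obtain ⟨v, hv, hveq⟩ := hμ
  have hMv : M.mulVec v = μ • v := by
    rw [Matrix.sub_mulVec, Matrix.smul_mulVec, Matrix.one_mulVec, sub_eq_zero] at hveq
    exact hveq.symm
  have key : ∀ w, star v ⬝ᵥ Mᴴ.mulVec w = star μ * (star v ⬝ᵥ w) := by
    intro w
    rw [Matrix.dotProduct_mulVec, ← Matrix.star_mulVec, hMv, star_smul, smul_dotProduct,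
      smul_eq_mul]
  set h := star v ⬝ᵥ Hm.mulVec v with hdef
  have hh := hH.dotProduct_mulVec_pos hv
  have hd := hpos.dotProduct_mulVec_pos hv
  have t1 : star v ⬝ᵥ (Hm * M).mulVec v = μ * h := by
    rw [← Matrix.mulVec_mulVec, hMv, Matrix.mulVec_smul, dotProduct_smul, smul_eq_mul]
  have t2 : star v ⬝ᵥ (Mᴴ * Hm).mulVec v = star μ * h := by
    rw [← Matrix.mulVec_mulVec, key]
  have t3 : star v ⬝ᵥ (Mᴴ * Hm * M).mulVec v = μ * (star μ * h) := by
    rw [← Matrix.mulVec_mulVec, hMv, Matrix.mulVec_smul, dotProduct_smul, smul_eq_mul, t2]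
  have t4 : star v ⬝ᵥ (Hm * M ^ 2).mulVec v = μ * (μ * h) := by
    rw [pow_two, ← mul_assoc, ← Matrix.mulVec_mulVec, hMv, Matrix.mulVec_smul,
      dotProduct_smul, smul_eq_mul, t1]
  have t5 : star v ⬝ᵥ (Mᴴ ^ 2 * Hm).mulVec v = star μ * (star μ * h) := by
    rw [pow_two, mul_assoc, ← Matrix.mulVec_mulVec, key, ← Matrix.mulVec_mulVec, key, hdef]
  have hcalc : star v ⬝ᵥ ((Hm * M + Mᴴ * Hm - c2 • (Mᴴ * Hm * M)
      + c4 • (Hm * M ^ 2 + Mᴴ ^ 2 * Hm)).mulVec v)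
      = (μ + star μ - c2 * (star μ * μ) + c4 * (μ * μ + star μ * star μ)) * h := by
    rw [Matrix.add_mulVec, Matrix.sub_mulVec, Matrix.add_mulVec, Matrix.smul_mulVec,
      Matrix.smul_mulVec, Matrix.add_mulVec]
    rw [dotProduct_add, dotProduct_sub, dotProduct_add,
      dotProduct_smul, dotProduct_smul, dotProduct_add]
    rw [t1, t2, t3, t4, t5]
    simp only [smul_eq_mul]
    ring
  rw [hcalc] at hd
  rw [Complex.lt_def] at hh hd
  obtain ⟨hh1, hh2⟩ := hh
  obtain ⟨hd1, _⟩ := hd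
  simp only [Complex.zero_re, Complex.zero_im] at hh1 hh2 hd1
  have hsre : 0 < (μ + star μ - c2 * (star μ * μ) + c4 * (μ * μ + star μ * star μ)).re := by
    by_contra hc
    push_neg at hc
    rw [Complex.mul_re] at hd1
    rw [← hh2] at hd1
    nlinarith [mul_nonneg (neg_nonneg.mpr hc) (le_of_lt hh1)]
  set s := μ + star μ - c2 * (star μ * μ) + c4 * (μ * μ + star μ * star μ) with hs
  have hsval : s.re = 2 * μ.re - μ.im ^ 2 / p := by
    rw [hs]
    simp [Complex.add_re, Complex.sub_re, Complex.mul_re, Complex.mul_im, c2, c4,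
      Complex.ofReal_re, Complex.ofReal_im]
    field_simp
    ring
  rw [hsval] at hsre
  have : μ.im ^ 2 / p < 2 * μ.re := by linarith
  calc μ.im ^ 2 = (μ.im ^ 2 / p) * p := by field_simp
  _ < (2 * μ.re) * p := by exact mul_lt_mul_of_pos_right this hp
  _ = 2 * p * μ.re := by ring

/-- Under the perturbation condition (15) for the interior of the parabola, the
parabolic Lyapunov-type equation for the perturbed matrix `A + B` is uniquely
solvable for every right-hand side `C`. -/
theorem perturbed_parabola_equation_unique_solvable {n : ℕ} (p : ℝ) (hp : 0 < p)
    (A : Matrix (Fin n) (Fin n) ℂ)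
    (hA : ∀ μ ∈ spectrum ℂ A, μ.im ^ 2 < 2 * p * μ.re)
    (H : Matrix (Fin n) (Fin n) ℂ) (hH : H.PosDef)
    (heq : H * A + Aᴴ * H - ((1 / (2 * p) : ℝ) : ℂ) • (Aᴴ * H * A)
      + ((1 / (4 * p) : ℝ) : ℂ) • (H * A ^ 2 + Aᴴ ^ 2 * H) = 1)
    (B : Matrix (Fin n) (Fin n) ℂ)
    (hB : (H * B + Bᴴ * H - ((1 / (2 * p) : ℝ) : ℂ) • (Aᴴ * H * B + Bᴴ * H * A + Bᴴ * H * B)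
      + ((1 / (4 * p) : ℝ) : ℂ) •
        (H * (A * B + B * A + B ^ 2) + (A * B + B * A + B ^ 2)ᴴ * H) + 1).PosDef) :
    ∀ C : Matrix (Fin n) (Fin n) ℂ,
      ∃! K : Matrix (Fin n) (Fin n) ℂ,
        K * (A + B) + (A + B)ᴴ * K - ((1 / (2 * p) : ℝ) : ℂ) • ((A + B)ᴴ * K * (A + B))
          + ((1 / (4 * p) : ℝ) : ℂ) • (K * (A + B) ^ 2 + ((A + B)ᴴ) ^ 2 * K) = C := by
  set c2 : ℂ := ((1 / (2 * p) : ℝ) : ℂ) with hc2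
  set c4 : ℂ := ((1 / (4 * p) : ℝ) : ℂ) with hc4
  have hiden : H * (A + B) + (A + B)ᴴ * H - c2 • ((A + B)ᴴ * H * (A + B))
      + c4 • (H * (A + B) ^ 2 + ((A + B)ᴴ) ^ 2 * H)
      = (H * A + Aᴴ * H - c2 • (Aᴴ * H * A) + c4 • (H * A ^ 2 + Aᴴ ^ 2 * H))
        + (H * B + Bᴴ * H - c2 • (Aᴴ * H * B + Bᴴ * H * A + Bᴴ * H * B)
          + c4 • (H * (A * B + B * A + B ^ 2) + (A * B + B * A + B ^ 2)ᴴ * H)) := by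
    simp only [conjTranspose_add, conjTranspose_mul, conjTranspose_pow, pow_two,
      mul_add, add_mul, smul_add, mul_assoc]
    module
  have hpos : (H * (A + B) + (A + B)ᴴ * H - c2 • ((A + B)ᴴ * H * (A + B))
      + c4 • (H * (A + B) ^ 2 + ((A + B)ᴴ) ^ 2 * H)).PosDef := by
    rw [hiden, heq]
    have h1 : (1 : Matrix (Fin n) (Fin n) ℂ)
        + (H * B + Bᴴ * H - c2 • (Aᴴ * H * B + Bᴴ * H * A + Bᴴ * H * B)
          + c4 • (H * (A * B + B * A + B ^ 2) + (A * B + B * A + B ^ 2)ᴴ * H))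
        = H * B + Bᴴ * H - c2 • (Aᴴ * H * B + Bᴴ * H * A + Bᴴ * H * B)
          + c4 • (H * (A * B + B * A + B ^ 2) + (A * B + B * A + B ^ 2)ᴴ * H) + 1 := by
      abel
    rw [h1]
    exact hB
  have hspecM : ∀ μ ∈ spectrum ℂ (A + B), μ.im ^ 2 < 2 * p * μ.re :=
    spec_parab hp (A + B) H hH hpos
  set P : Module.End ℂ (Matrix (Fin n) (Fin n) ℂ) := LinearMap.mulLeft ℂ (A + B)ᴴ with hP
  set Q : Module.End ℂ (Matrix (Fin n) (Fin n) ℂ) := LinearMap.mulRight ℂ (A + B) with hQ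
  set φ : Module.End ℂ (Matrix (Fin n) (Fin n) ℂ)
    := Q + P - c2 • (Q ∘ₗ P) + c4 • (Q ∘ₗ Q + P ∘ₗ P) with hphi
  have hφapp : ∀ X : Matrix (Fin n) (Fin n) ℂ,
      φ X = X * (A + B) + (A + B)ᴴ * X - c2 • ((A + B)ᴴ * X * (A + B))
        + c4 • (X * (A + B) ^ 2 + ((A + B)ᴴ) ^ 2 * X) := by
    intro X
    simp [hphi, hP, hQ, LinearMap.mulLeft_apply, LinearMap.mulRight_apply, mul_assoc, pow_two]
  have hinj : Function.Injective φ := by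
    rw [← LinearMap.ker_eq_bot, LinearMap.ker_eq_bot']
    intro K hK
    refine op_inj hp (A + B) hspecM K ?_
    rw [← hφapp]
    exact hK
  have hsurj : Function.Surjective φ := LinearMap.injective_iff_surjective.mp hinj
  intro C
  obtain ⟨K, hKC⟩ := hsurj C
  refine ⟨K, ?_, ?_⟩
  · exact (hφapp K).symm.trans hKC
  · intro K' hK'
    apply hinj
    rw [hφapp K', hK', hKC]
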